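/- There exists an infinite family of real symmetric matrices A (of size 2n+1 for each n ≥ 1) with |A|_∞ = 1 and σ₁(A)² = |A|_∞ · ‖A‖_□ · (2n+1)², showing the bound σ₁(A) ≤ 2√(|A|_∞·‖A‖_□·mn) is tight up to factor 2. Specifically, the matrix with a_{1i} = a_{i1} = 1 for 2 ≤ i ≤ n+1, a_{1i} = a_{i1} = -1 for n+2 ≤ i ≤ 2n+1, and all other entries 0, satisfies σ₁(A) = √(2n) and ‖A‖_□·(2n+1)² = 2n. -/

import Mathlib

open Matrix Finset

/-- The cut-norm of a real square matrix of size `N`. -/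
noncomputable def cutNorm {m n : ℕ} (A : Matrix (Fin m) (Fin n) ℝ) : ℝ :=
  Finset.univ.sup' Finset.univ_nonempty
    (fun p : Finset (Fin m) × Finset (Fin n) =>
      |∑ i ∈ p.1, ∑ j ∈ p.2, A i j| / (m * n))

/-- `|A|_∞ = max_{i,j} |a_{ij}|`. -/
noncomputable def supAbs {m n : ℕ} (A : Matrix (Fin m) (Fin n) ℝ) : ℝ :=
  ⨆ i, ⨆ j, |A i j|

/-- `f` rearranged in decreasing order. -/
noncomputable def sortDesc {N : ℕ} (f : Fin N → ℝ) : Fin N → ℝ :=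
  fun i => f (Tuple.sort f i.rev)

/-- The singular values `σ₁(A) ≥ σ₂(A) ≥ ⋯` of `A` (0-indexed). -/
noncomputable def singVal {m n : ℕ} (A : Matrix (Fin m) (Fin n) ℝ) (i : ℕ) : ℝ :=
  if h : i < n then
    Real.sqrt (sortDesc (Matrix.isHermitian_iff_isSymm.2 (by simp [Matrix.IsSymm, Matrix.transpose_mul]) :
      (Aᵀ * A).IsHermitian).eigenvalues ⟨i, h⟩)
  else 0

/-- First row/column pattern of the extremal matrix: `1` at positions `1,…,n`,
`-1` at positions `n+1,…,2n` (0-indexed), `0` at position `0`. -/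
noncomputable def extremalVec (n : ℕ) (k : ℕ) : ℝ :=
  if 1 ≤ k ∧ k ≤ n then 1 else if n + 1 ≤ k ∧ k ≤ 2 * n then -1 else 0

/-- The symmetric `(2n+1) × (2n+1)` matrix whose first row and column are
`extremalVec n`, all other entries being `0`. -/
noncomputable def extremalMatrix (n : ℕ) : Matrix (Fin (2 * n + 1)) (Fin (2 * n + 1)) ℝ :=
  Matrix.of fun i j =>
    if i = 0 then extremalVec n j else if j = 0 then extremalVec n i else 0

section Aux

set_option linter.unnecessarySeqFocus false

lemma ev_zero (n : ℕ) : extremalVec n 0 = 0 := by simp [extremalVec]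

lemma ev_abs_le (n k : ℕ) : |extremalVec n k| ≤ 1 := by
  unfold extremalVec; split_ifs <;> norm_num

lemma ev_sq (n : ℕ) (k : Fin (2*n+1)) :
    extremalVec n ↑k * extremalVec n ↑k = if k = 0 then 0 else 1 := by
  have hk := k.isLt
  rcases eq_or_ne k 0 with h | h
  · subst h; simp [extremalVec]
  · have h0 : (k : ℕ) ≠ 0 := fun hc => h (Fin.ext hc)
    unfold extremalVec
    rw [if_neg h]
    split_ifs with h1 h2 <;> first | omega | norm_num

lemma pos_sum (n : ℕ) :
    ∑ j : Fin (2*n+1), (if 1 ≤ (j:ℕ) ∧ (j:ℕ) ≤ n then (1:ℝ) else 0) = n := by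
  rw [Fin.sum_univ_eq_sum_range (fun j => if 1 ≤ j ∧ j ≤ n then (1:ℝ) else 0)]
  rw [Finset.sum_boole]
  have : (Finset.range (2*n+1)).filter (fun j => 1 ≤ j ∧ j ≤ n) = Finset.Ico 1 (n+1) := by
    ext j; simp [Finset.mem_filter, Finset.mem_range, Finset.mem_Ico]; omega
  rw [this, Nat.card_Ico]; simp

lemma neg_sum (n : ℕ) :
    ∑ j : Fin (2*n+1), (if n+1 ≤ (j:ℕ) ∧ (j:ℕ) ≤ 2*n then (1:ℝ) else 0) = n := by
  rw [Fin.sum_univ_eq_sum_range (fun j => if n+1 ≤ j ∧ j ≤ 2*n then (1:ℝ) else 0)]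
  rw [Finset.sum_boole]
  have : (Finset.range (2*n+1)).filter (fun j => n+1 ≤ j ∧ j ≤ 2*n) = Finset.Ico (n+1) (2*n+1) := by
    ext j; simp [Finset.mem_filter, Finset.mem_range, Finset.mem_Ico]
  rw [this, Nat.card_Ico]; norm_cast; omega

lemma ev_sq_sum (n : ℕ) : ∑ k : Fin (2*n+1), extremalVec n ↑k * extremalVec n ↑k = 2*n := by
  simp_rw [ev_sq]
  have : ∀ k : Fin (2*n+1), (if k = 0 then (0:ℝ) else 1) = 1 - (if k = 0 then 1 else 0) := by
    intro k; split_ifs <;> norm_num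
  simp_rw [this, Finset.sum_sub_distrib, Finset.sum_const,
    Finset.sum_ite_eq' Finset.univ (0 : Fin (2*n+1))]
  simp [Finset.card_univ]

lemma ev_sum_le (n : ℕ) (Z : Finset (Fin (2*n+1))) : |∑ j ∈ Z, extremalVec n ↑j| ≤ n := by
  rw [abs_le]
  constructor
  · have h1 : ∀ j ∈ Z, -(if n+1 ≤ (j:ℕ) ∧ (j:ℕ) ≤ 2*n then (1:ℝ) else 0) ≤ extremalVec n ↑j := by
      intro j _; unfold extremalVec; split_ifs <;> norm_num
    have h2 : ∑ j ∈ Z, -(if n+1 ≤ (j:ℕ) ∧ (j:ℕ) ≤ 2*n then (1:ℝ) else 0)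
        ≥ ∑ j : Fin (2*n+1), -(if n+1 ≤ (j:ℕ) ∧ (j:ℕ) ≤ 2*n then (1:ℝ) else 0) := by
      rw [ge_iff_le, Finset.sum_neg_distrib, Finset.sum_neg_distrib, neg_le_neg_iff]
      exact Finset.sum_le_sum_of_subset_of_nonneg (Finset.subset_univ Z)
        (fun j _ _ => by positivity)
    have h3 : ∑ j : Fin (2*n+1), -(if n+1 ≤ (j:ℕ) ∧ (j:ℕ) ≤ 2*n then (1:ℝ) else 0) = -n := by
      rw [Finset.sum_neg_distrib, neg_sum]
    calc (-n : ℝ) = ∑ j : Fin (2*n+1), -(if n+1 ≤ (j:ℕ) ∧ (j:ℕ) ≤ 2*n then (1:ℝ) else 0) := h3.symm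
      _ ≤ ∑ j ∈ Z, -(if n+1 ≤ (j:ℕ) ∧ (j:ℕ) ≤ 2*n then (1:ℝ) else 0) := h2
      _ ≤ ∑ j ∈ Z, extremalVec n ↑j := Finset.sum_le_sum h1
  · have h1 : ∀ j ∈ Z, extremalVec n ↑j ≤ (if 1 ≤ (j:ℕ) ∧ (j:ℕ) ≤ n then (1:ℝ) else 0) := by
      intro j _; unfold extremalVec; split_ifs <;> norm_num
    calc ∑ j ∈ Z, extremalVec n ↑j ≤ ∑ j ∈ Z, (if 1 ≤ (j:ℕ) ∧ (j:ℕ) ≤ n then (1:ℝ) else 0) :=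
        Finset.sum_le_sum h1
      _ ≤ ∑ j : Fin (2*n+1), (if 1 ≤ (j:ℕ) ∧ (j:ℕ) ≤ n then (1:ℝ) else 0) :=
        Finset.sum_le_sum_of_subset_of_nonneg (Finset.subset_univ Z) (fun j _ _ => by positivity)
      _ = n := pos_sum n

/-- entry decomposition -/
lemma em_apply (n : ℕ) (i j : Fin (2*n+1)) :
    extremalMatrix n i j =
      (if i = 0 then extremalVec n ↑j else 0) + (if j = 0 then extremalVec n ↑i else 0) := by
  simp only [extremalMatrix, Matrix.of_apply]
  rcases eq_or_ne i 0 with hi | hi <;> rcases eq_or_ne j 0 with hj | hj <;>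
    simp [hi, hj, ev_zero]

/-- the explicit square -/
noncomputable def Bmat (n : ℕ) : Matrix (Fin (2*n+1)) (Fin (2*n+1)) ℝ :=
  Matrix.of fun i j =>
    if i = 0 then (if j = 0 then (2*n : ℝ) else 0)
    else if j = 0 then 0 else extremalVec n ↑i * extremalVec n ↑j

lemma transpose_mul_self_eq (n : ℕ) :
    (extremalMatrix n)ᵀ * extremalMatrix n = Bmat n := by
  ext i j
  simp only [Matrix.mul_apply, Matrix.transpose_apply, Bmat, Matrix.of_apply]
  rcases eq_or_ne i 0 with hi | hi <;> rcases eq_or_ne j 0 with hj | hj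
  · subst hi; subst hj
    simp only [if_pos rfl]
    rw [← ev_sq_sum n]
    refine Finset.sum_congr rfl fun k _ => ?_
    rcases eq_or_ne k 0 with hk | hk <;> simp [extremalMatrix, hk, ev_zero]
  · subst hi
    simp only [if_pos rfl, if_neg hj]
    refine Finset.sum_eq_zero fun k _ => ?_
    rcases eq_or_ne k 0 with hk | hk <;> simp [extremalMatrix, hk, hj, ev_zero]
  · subst hj
    simp only [if_neg hi, if_pos rfl]
    refine Finset.sum_eq_zero fun k _ => ?_
    rcases eq_or_ne k 0 with hk | hk <;> simp [extremalMatrix, hk, hi, ev_zero]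
  · simp only [if_neg hi, if_neg hj]
    have hterm : ∀ k : Fin (2*n+1), extremalMatrix n k i * extremalMatrix n k j
        = if k = 0 then extremalVec n ↑i * extremalVec n ↑j else 0 := by
      intro k
      rcases eq_or_ne k 0 with hk | hk <;> simp [extremalMatrix, hk, hi, hj]
    simp_rw [hterm]
    rw [Finset.sum_ite_eq' Finset.univ (0 : Fin (2*n+1))]
    simp

lemma Bmat_sq (n : ℕ) : Bmat n * Bmat n = (2*n : ℝ) • Bmat n := by
  ext i j
  simp only [Matrix.mul_apply, Matrix.smul_apply, smul_eq_mul]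
  rcases eq_or_ne i 0 with hi | hi <;> rcases eq_or_ne j 0 with hj | hj
  · subst hi; subst hj
    have hterm : ∀ k : Fin (2*n+1), Bmat n 0 k * Bmat n k 0
        = if k = 0 then (2*n:ℝ)*(2*n) else 0 := by
      intro k; rcases eq_or_ne k 0 with hk | hk <;> simp [Bmat, hk]
    simp_rw [hterm]
    rw [Finset.sum_ite_eq' Finset.univ (0 : Fin (2*n+1))]
    simp [Bmat]
  · subst hi
    have hterm : ∀ k : Fin (2*n+1), Bmat n 0 k * Bmat n k j = 0 := by
      intro k; rcases eq_or_ne k 0 with hk | hk <;> simp [Bmat, hk, hj]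
    simp_rw [hterm]
    simp [Bmat, hj]
  · subst hj
    have hterm : ∀ k : Fin (2*n+1), Bmat n i k * Bmat n k 0 = 0 := by
      intro k; rcases eq_or_ne k 0 with hk | hk <;> simp [Bmat, hk, hi]
    simp_rw [hterm]
    simp [Bmat, hi]
  · have hterm : ∀ k : Fin (2*n+1), Bmat n i k * Bmat n k j
        = (extremalVec n ↑i * extremalVec n ↑j) * (extremalVec n ↑k * extremalVec n ↑k) := by
      intro k
      rcases eq_or_ne k 0 with hk | hk
      · subst hk; simp [Bmat, hi, hj, ev_zero]
      · simp only [Bmat, Matrix.of_apply, if_neg hi, if_neg hk, if_neg hj]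
        ring
    simp_rw [hterm]
    rw [← Finset.mul_sum, ev_sq_sum]
    simp [Bmat, hi, hj]
    ring

lemma em_herm (n : ℕ) : ((extremalMatrix n)ᵀ * extremalMatrix n).IsHermitian :=
  Matrix.isHermitian_iff_isSymm.2 (by simp [Matrix.IsSymm, Matrix.transpose_mul])

lemma eig_dichotomy (n : ℕ) (i : Fin (2*n+1)) :
    (em_herm n).eigenvalues i = 0 ∨
    (em_herm n).eigenvalues i = 2*n := by
  set hH := em_herm n with hHdef
  set M := (extremalMatrix n)ᵀ * extremalMatrix n with hMdef
  set v := ⇑(hH.eigenvectorBasis i) with hvdef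
  set lam := hH.eigenvalues i with hlamdef
  have hv : M *ᵥ v = lam • v := hH.mulVec_eigenvectorBasis i
  have hvne : v ≠ 0 := by
    have := hH.eigenvectorBasis.orthonormal.ne_zero i
    intro hc
    apply this
    ext k
    exact congrFun hc k
  have hMM : M * M = (2*n : ℝ) • M := by
    rw [hMdef, transpose_mul_self_eq, Bmat_sq]
  have h1 : (M * M) *ᵥ v = (lam * lam) • v := by
    rw [← Matrix.mulVec_mulVec, hv, Matrix.mulVec_smul, hv, smul_smul]
  have h2 : (M * M) *ᵥ v = ((2*n : ℝ) * lam) • v := by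
    rw [hMM, Matrix.smul_mulVec, hv, smul_smul]
  have h3 : (lam * lam - (2*n : ℝ) * lam) • v = 0 := by
    rw [sub_smul, h1.symm.trans h2]
    simp
  rcases smul_eq_zero.mp h3 with h | h
  · have : lam * (lam - 2*n) = 0 := by ring_nf; ring_nf at h; linarith
    rcases mul_eq_zero.mp this with h' | h'
    · exact Or.inl h'
    · exact Or.inr (by linarith [sub_eq_zero.mp h'])
  · exact absurd h hvne

lemma exists_eig (n : ℕ) (hn : 1 ≤ n) :
    ∃ i, (em_herm n).eigenvalues i = 2*n := by
  by_contra hc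
  push_neg at hc
  set hH := em_herm n with hHdef
  have hz : hH.eigenvalues = fun _ => 0 := by
    funext i
    rcases eig_dichotomy n i with h | h
    · exact h
    · exact absurd h (hc i)
  have hst := hH.spectral_theorem
  rw [hz] at hst
  norm_num [Function.comp_def] at hst
  have h00 := congrFun (congrFun hst 0) 0
  rw [transpose_mul_self_eq] at h00
  simp [Bmat] at h00
  omega

lemma sortDesc_eig (n : ℕ) (hn : 1 ≤ n) (h0 : (0:ℕ) < 2*n+1) :
    sortDesc (em_herm n).eigenvalues ⟨0, h0⟩
      = 2*n := by
  set f := (em_herm n).eigenvalues with hf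
  have hrev : (⟨0, h0⟩ : Fin (2*n+1)).rev = Fin.last (2*n) := by
    rw [show (⟨0, h0⟩ : Fin (2*n+1)) = 0 from rfl, Fin.rev_zero]
  unfold sortDesc
  rw [hrev]
  obtain ⟨i, hi⟩ := exists_eig n hn
  rw [← hf] at hi
  have hmono := Tuple.monotone_sort f
  have hle : f i ≤ f (Tuple.sort f (Fin.last (2*n))) := by
    have := hmono (Fin.le_last ((Tuple.sort f).symm i))
    simpa using this
  rcases eig_dichotomy n (Tuple.sort f (Fin.last (2*n))) with h | h <;> rw [← hf] at h
  · rw [hi] at hle; rw [h] at hle ⊢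
    have : (1:ℝ) ≤ n := by exact_mod_cast hn
    linarith
  · exact h

lemma double_sum (n : ℕ) (X Y : Finset (Fin (2*n+1))) :
    ∑ i ∈ X, ∑ j ∈ Y, extremalMatrix n i j =
      (if (0 : Fin (2*n+1)) ∈ X then ∑ j ∈ Y, extremalVec n ↑j else 0) +
      (if (0 : Fin (2*n+1)) ∈ Y then ∑ i ∈ X, extremalVec n ↑i else 0) := by
  simp_rw [em_apply, Finset.sum_add_distrib]
  congr 1
  · have hinner : ∀ i ∈ X, ∑ j ∈ Y, (if i = 0 then extremalVec n ↑j else 0)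
        = if i = 0 then ∑ j ∈ Y, extremalVec n ↑j else 0 := by
      intro i _; split_ifs <;> simp
    rw [Finset.sum_congr rfl hinner, Finset.sum_ite_eq' X (0 : Fin (2*n+1))]
  · have hinner : ∀ i ∈ X, ∑ j ∈ Y, (if j = 0 then extremalVec n ↑i else 0)
        = if (0 : Fin (2*n+1)) ∈ Y then extremalVec n ↑i else 0 := by
      intro i _; rw [Finset.sum_ite_eq' Y (0 : Fin (2*n+1))]
    rw [Finset.sum_congr rfl hinner]
    split_ifs <;> simp

lemma double_sum_le (n : ℕ) (X Y : Finset (Fin (2*n+1))) :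
    |∑ i ∈ X, ∑ j ∈ Y, extremalMatrix n i j| ≤ 2*n := by
  rw [double_sum]
  refine (abs_add_le _ _).trans ?_
  have h1 : |if (0 : Fin (2*n+1)) ∈ X then ∑ j ∈ Y, extremalVec n ↑j else 0| ≤ n := by
    split_ifs
    · exact ev_sum_le n Y
    · simp
  have h2 : |if (0 : Fin (2*n+1)) ∈ Y then ∑ i ∈ X, extremalVec n ↑i else 0| ≤ n := by
    split_ifs
    · exact ev_sum_le n X
    · simp
  linarith

lemma achiever (n : ℕ) :
    ∑ i ∈ (Finset.univ.filter (fun j : Fin (2*n+1) => (j:ℕ) ≤ n)),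
      ∑ j ∈ (Finset.univ.filter (fun j : Fin (2*n+1) => (j:ℕ) ≤ n)),
        extremalMatrix n i j = 2*n := by
  set X := Finset.univ.filter (fun j : Fin (2*n+1) => (j:ℕ) ≤ n) with hX
  have h0X : (0 : Fin (2*n+1)) ∈ X := by simp [hX]
  have hsum : ∑ j ∈ X, extremalVec n ↑j = n := by
    rw [hX, Finset.sum_filter, ← pos_sum n]
    refine Finset.sum_congr rfl fun j _ => ?_
    unfold extremalVec
    split_ifs <;> first | (exfalso; omega) | rfl | norm_num
  rw [double_sum, if_pos h0X, hsum]
  ring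

end Aux

/-- For every `n ≥ 1` there is a real symmetric matrix `A` of size `2n+1`
(namely `extremalMatrix n`) with `|A|_∞ = 1`, `σ₁(A) = √(2n)` and
`‖A‖_□ (2n+1)² = 2n`, hence `σ₁(A)² = |A|_∞ ‖A‖_□ (2n+1)²`:  the bound
`σ₁(A) ≤ 2 √(|A|_∞ ‖A‖_□ m n)` is tight up to the factor `2`. -/
theorem cutNorm_singVal_tight (n : ℕ) (hn : 1 ≤ n) :
    (extremalMatrix n).IsSymm ∧
    supAbs (extremalMatrix n) = 1 ∧
    singVal (extremalMatrix n) 0 = Real.sqrt (2 * n) ∧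
    cutNorm (extremalMatrix n) * (2 * n + 1) ^ 2 = 2 * n ∧
    singVal (extremalMatrix n) 0 ^ 2 =
      supAbs (extremalMatrix n) * cutNorm (extremalMatrix n) * (2 * n + 1) ^ 2 := by
  have hNpos : (0:ℝ) < (2*n+1 : ℝ) := by positivity
  have hsym : (extremalMatrix n).IsSymm := by
    rw [Matrix.IsSymm]
    ext i j
    rw [Matrix.transpose_apply, em_apply, em_apply]
    ring
  have habs : supAbs (extremalMatrix n) = 1 := by
    refine le_antisymm ?_ ?_
    · refine ciSup_le fun i => ciSup_le fun j => ?_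
      simp only [extremalMatrix, Matrix.of_apply]
      split_ifs <;> first | exact ev_abs_le n _ | norm_num
    · have e1 : extremalMatrix n 0 ⟨1, by omega⟩ = 1 := by
        simp [extremalMatrix, extremalVec, hn]
      have b1 : (1:ℝ) ≤ ⨆ j, |extremalMatrix n 0 j| := by
        have := le_ciSup (f := fun j => |extremalMatrix n 0 j|)
          (Finite.bddAbove_range _) (⟨1, by omega⟩ : Fin (2*n+1))
        rw [e1] at this
        simpa using this
      have b2 : (⨆ j, |extremalMatrix n 0 j|) ≤ ⨆ i, ⨆ j, |extremalMatrix n i j| :=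
        le_ciSup (f := fun i => ⨆ j, |extremalMatrix n i j|) (Finite.bddAbove_range _) 0
      exact b1.trans b2
  have hsing : singVal (extremalMatrix n) 0 = Real.sqrt (2 * n) := by
    unfold singVal
    rw [dif_pos (by omega : (0:ℕ) < 2*n+1), sortDesc_eig n hn]
  have hcutval : cutNorm (extremalMatrix n) = 2*n / ((2*n+1 : ℝ)^2) := by
    refine le_antisymm ?_ ?_
    · refine Finset.sup'_le _ _ fun p _ => ?_
      have hle := double_sum_le n p.1 p.2
      have : ((2*n+1 : ℕ) : ℝ) * ((2*n+1 : ℕ) : ℝ) = (2*n+1 : ℝ)^2 := by push_cast; ring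
      rw [this]
      gcongr
    · have := Finset.le_sup' (f := fun p : Finset (Fin (2*n+1)) × Finset (Fin (2*n+1)) =>
        |∑ i ∈ p.1, ∑ j ∈ p.2, extremalMatrix n i j| / ((2*n+1 : ℕ) * (2*n+1 : ℕ) : ℝ))
        (b := (Finset.univ.filter (fun j : Fin (2*n+1) => (j:ℕ) ≤ n),
               Finset.univ.filter (fun j : Fin (2*n+1) => (j:ℕ) ≤ n)))
        (Finset.mem_univ _)
      unfold cutNorm
      refine le_trans (le_of_eq ?_) this
      have hcast : ((2*n+1 : ℕ) : ℝ) * ((2*n+1 : ℕ) : ℝ) = (2*(n:ℝ)+1)^2 := by push_cast; ring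
      rw [achiever n, abs_of_nonneg (by positivity : (0:ℝ) ≤ 2*(n:ℝ)), hcast]
  have hcut : cutNorm (extremalMatrix n) * (2 * n + 1) ^ 2 = 2 * n := by
    rw [hcutval]
    exact div_mul_cancel₀ _ (by positivity)
  refine ⟨hsym, habs, hsing, hcut, ?_⟩
  rw [hsing, habs, one_mul, hcut, Real.sq_sqrt (by positivity)]
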